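/- arXiv:0710.4596 — 4 statements merged into one kernel-verified Lean document; each statement's English description precedes it below -/
import Mathlib

section
/- For every lattice point a ∈ ℤ³ (viewed in ℝ³) and every permutation (i,j,k) of (1,2,3), the three slant triangles T(a;i,j), T(a+eᵢ;j,k) and T(a−e_k;k,i) have the same image under π, i.e. π(T(a;i,j)) = π(T(a+eᵢ;j,k)) = π(T(a−e_k;k,i)), and their gradients {i,j}, {j,k}, {k,i} are pairwise distinct (they exhaust all three 2-element subsets of {1,2,3}). -/
noncomputable section

/-- Ambient space ℝ³. -/
abbrev E3 := EuclideanSpace ℝ (Fin 3)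

/-- Standard basis vector eᵢ of ℝ³. -/
def ee3 (i : Fin 3) : E3 := EuclideanSpace.single i 1

/-- 𝟙 = e₁ + e₂ + e₃. -/
def ones3 : E3 := ∑ i, ee3 i

/-- Orthogonal projection π onto the hyperplane H = {v ∈ ℝ³ : v₁+v₂+v₃ = 0},
    given by π(v) = v − ((v₁+v₂+v₃)/3)·𝟙. -/
def proj3 (v : E3) : E3 := v - ((∑ i, v i) / 3) • ones3

/-- A lattice point of ℤ³ viewed in ℝ³. -/
def toE3 (a : Fin 3 → ℤ) : E3 := WithLp.toLp 2 (fun n => (a n : ℝ))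

lemma ones3_apply (n : Fin 3) : ones3 n = 1 := by
  have : ones3 n = ee3 0 n + ee3 1 n + ee3 2 n := by
    rw [show ones3 = ee3 0 + ee3 1 + ee3 2 from by simp [ones3, Fin.sum_univ_three]]
    rfl
  rw [this]
  fin_cases n <;> simp [ee3, EuclideanSpace.single_apply]

lemma sum_ones3 : ∑ n, ones3 n = 3 := by
  rw [Fin.sum_univ_three, ones3_apply, ones3_apply, ones3_apply]
  norm_num

lemma proj3_isLinear : IsLinearMap ℝ proj3 := by
  constructor
  · intro v w
    simp only [proj3]
    have : ∀ n, (v + w) n = v n + w n := fun n => rfl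
    rw [Finset.sum_congr rfl (fun n _ => this n), Finset.sum_add_distrib]
    rw [show ((∑ n, v n + ∑ n, w n) / 3 : ℝ) = (∑ n, v n)/3 + (∑ n, w n)/3 by ring]
    module
  · intro c v
    simp only [proj3]
    have : ∀ n, (c • v) n = c * v n := fun n => rfl
    rw [Finset.sum_congr rfl (fun n _ => this n), ← Finset.mul_sum]
    rw [show ((c * ∑ n, v n) / 3 : ℝ) = c * ((∑ n, v n)/3) by ring]
    module

lemma proj3_add_ones (v : E3) : proj3 (v + ones3) = proj3 v := by
  simp only [proj3]
  have : ∀ n, (v + ones3) n = v n + ones3 n := fun n => rfl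
  rw [Finset.sum_congr rfl (fun n _ => this n), Finset.sum_add_distrib, sum_ones3]
  rw [show ((∑ n, v n + 3) / 3 : ℝ) = (∑ n, v n)/3 + 1 by ring]
  module

lemma toE3_single (i : Fin 3) : toE3 (Pi.single i 1) = ee3 i := by
  ext n
  simp only [toE3, PiLp.toLp_apply]
  by_cases h : n = i <;> simp [h, ee3, EuclideanSpace.single_apply, Pi.single_apply]

lemma toE3_add_single (a : Fin 3 → ℤ) (i : Fin 3) :
    toE3 (a + Pi.single i 1) = toE3 a + ee3 i := by
  rw [← toE3_single i]
  ext n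
  simp only [toE3, PiLp.toLp_apply, PiLp.add_apply, Pi.add_apply, Int.cast_add]

lemma toE3_sub_single (a : Fin 3 → ℤ) (i : Fin 3) :
    toE3 (a - Pi.single i 1) = toE3 a - ee3 i := by
  rw [← toE3_single i]
  ext n
  simp only [toE3, PiLp.toLp_apply, PiLp.sub_apply, Pi.sub_apply, Int.cast_sub]

lemma ee3_sum_perm (i j k : Fin 3) (hij : i ≠ j) (hjk : j ≠ k) (hik : i ≠ k) :
    ee3 i + ee3 j + ee3 k = ones3 := by
  have : ones3 = ee3 0 + ee3 1 + ee3 2 := by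
    simp [ones3, Fin.sum_univ_three]
  fin_cases i <;> fin_cases j <;> fin_cases k <;> simp_all <;> abel

/-- Slant triangle T(a;i,j) = conv{a, a+eᵢ, a+eᵢ+eⱼ}. -/
def slant3 (a : Fin 3 → ℤ) (i j : Fin 3) : Set E3 :=
  convexHull ℝ {toE3 a, toE3 a + ee3 i, toE3 a + ee3 i + ee3 j}

/-- Flat triangle: the image π(T(a;i,j)). -/
def flat3 (a : Fin 3 → ℤ) (i j : Fin 3) : Set E3 := proj3 '' slant3 a i j

lemma flat3_eq (a : Fin 3 → ℤ) (i j : Fin 3) :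
    flat3 a i j = convexHull ℝ
      {proj3 (toE3 a), proj3 (toE3 a + ee3 i), proj3 (toE3 a + ee3 i + ee3 j)} := by
  rw [flat3, slant3, proj3_isLinear.image_convexHull]
  congr 1
  simp [Set.image_insert_eq]


/-- the three slant triangles T(a;i,j), T(a+eᵢ;j,k), T(a−e_k;k,i)
have the same image under π, and their gradients {i,j}, {j,k}, {k,i} are pairwise
distinct, exhausting all three 2-element subsets of {1,2,3}. -/
theorem stmt0 (a : Fin 3 → ℤ) (i j k : Fin 3)
    (hij : i ≠ j) (hjk : j ≠ k) (hik : i ≠ k) :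
    flat3 a i j = flat3 (a + Pi.single i 1) j k ∧
    flat3 a i j = flat3 (a - Pi.single k 1) k i ∧
    ({i, j} : Finset (Fin 3)) ≠ {j, k} ∧
    ({j, k} : Finset (Fin 3)) ≠ {k, i} ∧
    ({i, j} : Finset (Fin 3)) ≠ {k, i} ∧
    ({({i, j} : Finset (Fin 3)), {j, k}, {k, i}} : Set (Finset (Fin 3))) =
      {s : Finset (Fin 3) | s.card = 2} := by
  set A := toE3 a with hA
  have hsum : ee3 i + ee3 j + ee3 k = ones3 := ee3_sum_perm i j k hij hjk hik
  have h1 : flat3 a i j = flat3 (a + Pi.single i 1) j k := by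
    rw [flat3_eq, flat3_eq, toE3_add_single]
    congr 1
    have e1 : proj3 (A + ee3 i + ee3 j + ee3 k) = proj3 A := by
      rw [show A + ee3 i + ee3 j + ee3 k = A + ones3 by rw [← hsum]; abel]
      exact proj3_add_ones A
    rw [e1]
    ext x
    simp only [Set.mem_insert_iff, Set.mem_singleton_iff]
    tauto
  have h2 : flat3 a i j = flat3 (a - Pi.single k 1) k i := by
    rw [flat3_eq, flat3_eq, toE3_sub_single]
    congr 1
    have e1 : proj3 (A - ee3 k) = proj3 (A + ee3 i + ee3 j) := by
      rw [show A + ee3 i + ee3 j = (A - ee3 k) + ones3 by rw [← hsum]; abel]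
      exact (proj3_add_ones _).symm
    have e2 : A - ee3 k + ee3 k = A := by abel
    rw [e1, e2]
    rw [← hA]
    ext x
    simp only [Set.mem_insert_iff, Set.mem_singleton_iff]
    tauto
  refine ⟨h1, h2, ?_, ?_, ?_, ?_⟩
  · intro h
    have : i ∈ ({j, k} : Finset (Fin 3)) := h ▸ Finset.mem_insert_self i {j}
    simp at this; tauto
  · intro h
    have : j ∈ ({k, i} : Finset (Fin 3)) := h ▸ Finset.mem_insert_self j {k}
    simp at this
    tauto
  · intro h
    have : j ∈ ({k, i} : Finset (Fin 3)) := h ▸ Finset.mem_insert_of_mem (Finset.mem_singleton_self j)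
    simp at this
    tauto
  · ext s
    simp only [Set.mem_insert_iff, Set.mem_singleton_iff, Set.mem_setOf_eq]
    fin_cases i <;> fin_cases j <;> fin_cases k <;> simp_all <;>
      · constructor
        · rintro (rfl | rfl | rfl) <;> decide
        · intro hs
          have := (Finset.card_eq_two).1 hs
          obtain ⟨x, y, hxy, rfl⟩ := this
          fin_cases x <;> fin_cases y <;> simp_all <;> decide
end
end

section
/- The flat triangles cover the hyperplane: H = {v ∈ ℝ³ : v₁+v₂+v₃ = 0} equals the union, over all a ∈ ℤ³ and all distinct i,j ∈ {1,2,3}, of the projected triangles π(T(a;i,j)). -/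
noncomputable section

lemma sum_proj3 (p : E3) : ∑ n, proj3 p n = 0 := by
  simp only [proj3, PiLp.sub_apply, PiLp.smul_apply, ones3_apply, smul_eq_mul, mul_one,
    Finset.sum_sub_distrib, Finset.sum_const, Finset.card_univ, Fintype.card_fin, nsmul_eq_mul]
  ring

lemma mem_slant3 (a : Fin 3 → ℤ) (i j : Fin 3) (s u : ℝ) (hu : 0 ≤ u) (hus : u ≤ s)
    (hs : s ≤ 1) : toE3 a + s • ee3 i + u • ee3 j ∈ slant3 a i j := by
  have h := (convex_convexHull ℝ
      ({toE3 a, toE3 a + ee3 i, toE3 a + ee3 i + ee3 j} : Set E3)).sum_mem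
    (t := (Finset.univ : Finset (Fin 3))) (w := ![1 - s, s - u, u])
    (z := ![toE3 a, toE3 a + ee3 i, toE3 a + ee3 i + ee3 j])
    (by intro k _; fin_cases k <;> simp <;> linarith)
    (by simp [Fin.sum_univ_three])
    (by
      intro k _
      fin_cases k <;> simp [slant3] <;> apply subset_convexHull <;> simp)
  have hsum : ∑ k, (![1 - s, s - u, u] k) •
      (![toE3 a, toE3 a + ee3 i, toE3 a + ee3 i + ee3 j] k)
      = toE3 a + s • ee3 i + u • ee3 j := by
    simp only [Fin.sum_univ_three, Matrix.cons_val_zero, Matrix.cons_val_one, Matrix.head_cons,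
      Matrix.cons_val_two, Matrix.tail_cons]
    module
  rw [hsum] at h
  exact h

/-- the flat triangles cover the hyperplane H. -/
theorem stmt3 :
    {v : E3 | ∑ n, v n = 0} =
      ⋃ (a : Fin 3 → ℤ) (i : Fin 3) (j : Fin 3) (_ : i ≠ j), flat3 a i j := by
  ext v
  simp only [Set.mem_setOf_eq, Set.mem_iUnion]
  constructor
  · intro hv
    have hv3 : v 0 + v 1 + v 2 = 0 := by simpa [Fin.sum_univ_three] using hv
    set b : ℝ := v 1 - v 0 with hb
    set c : ℝ := v 2 - v 0 with hc
    have hbc : b + c = -(3 * v 0) := by simp [hb, hc]; linarith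
    rcases le_total (c - ⌊c⌋) (b - ⌊b⌋) with hcase | hcase
    · refine ⟨![0, ⌊b⌋, ⌊c⌋], 1, 2, by decide,
        toE3 ![0, ⌊b⌋, ⌊c⌋] + (b - ⌊b⌋) • ee3 1 + (c - ⌊c⌋) • ee3 2, ?_, ?_⟩
      · exact mem_slant3 _ _ _ _ _ (by linarith [Int.floor_le c]) hcase
          (by linarith [Int.lt_floor_add_one b])
      · have hsump : ∑ n, (toE3 ![0, ⌊b⌋, ⌊c⌋] + (b - ⌊b⌋) • ee3 1 + (c - ⌊c⌋) • ee3 2) n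
            = b + c := by
          simp [Fin.sum_univ_three, toE3, ee3, PiLp.add_apply, PiLp.smul_apply,
            EuclideanSpace.single_apply]
        ext n
        rw [proj3, hsump]
        fin_cases n <;>
          simp [toE3, ee3, ones3_apply, PiLp.sub_apply, PiLp.add_apply, PiLp.smul_apply,
            EuclideanSpace.single_apply, hbc] <;> linarith
    · refine ⟨![0, ⌊b⌋, ⌊c⌋], 2, 1, by decide,
        toE3 ![0, ⌊b⌋, ⌊c⌋] + (c - ⌊c⌋) • ee3 2 + (b - ⌊b⌋) • ee3 1, ?_, ?_⟩
      · exact mem_slant3 _ _ _ _ _ (by linarith [Int.floor_le b]) hcase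
          (by linarith [Int.lt_floor_add_one c])
      · have hsump : ∑ n, (toE3 ![0, ⌊b⌋, ⌊c⌋] + (c - ⌊c⌋) • ee3 2 + (b - ⌊b⌋) • ee3 1) n
            = b + c := by
          simp [Fin.sum_univ_three, toE3, ee3, PiLp.add_apply, PiLp.smul_apply,
            EuclideanSpace.single_apply]
        ext n
        rw [proj3, hsump]
        fin_cases n <;>
          simp [toE3, ee3, ones3_apply, PiLp.sub_apply, PiLp.add_apply, PiLp.smul_apply,
            EuclideanSpace.single_apply, hbc] <;> linarith
  · rintro ⟨a, i, j, hij, p, _, rfl⟩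
    exact sum_proj3 p
end
end

section
/- The flat triangles tile the hyperplane without overlap: if a,b ∈ ℤ³, i ≠ j, k ≠ l, and π(T(a;i,j)) ≠ π(T(b;k,l)) as sets, then the relative interiors of π(T(a;i,j)) and π(T(b;k,l)) (i.e. their interiors within the 2-dimensional hyperplane H) are disjoint. -/
noncomputable section

namespace Stmt4Aux

lemma proj3_add (x y : E3) : proj3 (x + y) = proj3 x + proj3 y := by
  simp only [proj3, PiLp.add_apply, Finset.sum_add_distrib]; module

lemma proj3_smul (t : ℝ) (x : E3) : proj3 (t • x) = t • proj3 x := by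
  simp only [proj3, PiLp.smul_apply, smul_eq_mul, ← Finset.mul_sum]; module

lemma proj3_linear : IsLinearMap ℝ proj3 := ⟨proj3_add, proj3_smul⟩

def uu : E3 := proj3 (ee3 0)
def vv : E3 := proj3 (ee3 1)

lemma uu_def : proj3 (ee3 0) = uu := rfl
lemma vv_def : proj3 (ee3 1) = vv := rfl

lemma ww_eq : proj3 (ee3 2) = -uu - vv := by
  ext n
  fin_cases n <;>
    simp [proj3, uu, vv, ee3, ones3, Fin.sum_univ_three, EuclideanSpace.single_apply,
      PiLp.add_apply, PiLp.sub_apply, PiLp.neg_apply, PiLp.smul_apply] <;> ring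

/-- f(x) = x₀ - x₂, a linear functional. -/
def fL : E3 →ₗ[ℝ] ℝ where
  toFun x := x 0 - x 2
  map_add' x y := by simp [PiLp.add_apply]; ring
  map_smul' t x := by simp [PiLp.smul_apply]; ring

/-- g(x) = x₁ - x₂, a linear functional. -/
def gL : E3 →ₗ[ℝ] ℝ where
  toFun x := x 1 - x 2
  map_add' x y := by simp [PiLp.add_apply]; ring
  map_smul' t x := by simp [PiLp.smul_apply]; ring

lemma fL_apply (x : E3) : fL x = x 0 - x 2 := rfl
lemma gL_apply (x : E3) : gL x = x 1 - x 2 := rfl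

lemma f_uu : fL uu = 1 := by
  simp [fL_apply, uu, proj3, ee3, ones3, Fin.sum_univ_three, EuclideanSpace.single_apply,
    PiLp.sub_apply, PiLp.smul_apply, PiLp.add_apply]

lemma f_vv : fL vv = 0 := by
  simp [fL_apply, vv, proj3, ee3, ones3, Fin.sum_univ_three, EuclideanSpace.single_apply,
    PiLp.sub_apply, PiLp.smul_apply, PiLp.add_apply]

lemma g_uu : gL uu = 0 := by
  simp [gL_apply, uu, proj3, ee3, ones3, Fin.sum_univ_three, EuclideanSpace.single_apply,
    PiLp.sub_apply, PiLp.smul_apply, PiLp.add_apply]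

lemma g_vv : gL vv = 1 := by
  simp [gL_apply, vv, proj3, ee3, ones3, Fin.sum_univ_three, EuclideanSpace.single_apply,
    PiLp.sub_apply, PiLp.smul_apply, PiLp.add_apply]

/-- Base lattice point m·u + n·v. -/
def qq (m n : ℤ) : E3 := (m : ℝ) • uu + (n : ℝ) • vv

/-- Up triangle of the triangular lattice. -/
def upT (m n : ℤ) : Set E3 :=
  convexHull ℝ {qq m n, qq m n + uu, qq m n + uu + vv}

/-- Down triangle of the triangular lattice. -/
def dnT (m n : ℤ) : Set E3 :=
  convexHull ℝ {qq m n, qq m n + vv, qq m n + uu + vv}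

lemma rot (x y z : E3) : ({x, y, z} : Set E3) = {y, z, x} := by
  ext w; simp only [Set.mem_insert_iff, Set.mem_singleton_iff]; tauto

lemma tri_id {x y z x' y' z' : E3} (h1 : x = x') (h2 : y = y') (h3 : z = z') :
    ({x, y, z} : Set E3) = {x', y', z'} := by rw [h1, h2, h3]

lemma tri_rot1 {x y z x' y' z' : E3} (h1 : x = y') (h2 : y = z') (h3 : z = x') :
    ({x, y, z} : Set E3) = {x', y', z'} := by rw [h1, h2, h3, rot y' z' x', rot z' x' y']

lemma tri_rot2 {x y z x' y' z' : E3} (h1 : x = z') (h2 : y = x') (h3 : z = y') :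
    ({x, y, z} : Set E3) = {x', y', z'} := by rw [h1, h2, h3, rot z' x' y']

lemma hP (a : Fin 3 → ℤ) :
    proj3 (toE3 a) = ((a 0 : ℝ) - (a 2 : ℝ)) • uu + ((a 1 : ℝ) - (a 2 : ℝ)) • vv := by
  ext n
  fin_cases n <;>
    (simp [proj3, toE3, uu, vv, ee3, ones3, Fin.sum_univ_three, EuclideanSpace.single_apply,
      PiLp.add_apply, PiLp.sub_apply, PiLp.smul_apply]; ring)

lemma himg (a : Fin 3 → ℤ) (i j : Fin 3) : flat3 a i j =
    convexHull ℝ {proj3 (toE3 a), proj3 (toE3 a + ee3 i), proj3 (toE3 a + ee3 i + ee3 j)} := by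
  rw [flat3, slant3, proj3_linear.image_convexHull, Set.image_insert_eq, Set.image_insert_eq,
    Set.image_singleton]

lemma case01 (a : Fin 3 → ℤ) : flat3 a 0 1 = upT (a 0 - a 2) (a 1 - a 2) := by
  rw [himg, upT]; congr 1
  exact tri_id
    (by simp only [proj3_add, uu_def, vv_def, ww_eq, hP, qq]; push_cast; module)
    (by simp only [proj3_add, uu_def, vv_def, ww_eq, hP, qq]; push_cast; module)
    (by simp only [proj3_add, uu_def, vv_def, ww_eq, hP, qq]; push_cast; module)

lemma case02 (a : Fin 3 → ℤ) : flat3 a 0 2 = dnT (a 0 - a 2) (a 1 - a 2 - 1) := by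
  rw [himg, dnT]; congr 1
  exact tri_rot1
    (by simp only [proj3_add, uu_def, vv_def, ww_eq, hP, qq]; push_cast; module)
    (by simp only [proj3_add, uu_def, vv_def, ww_eq, hP, qq]; push_cast; module)
    (by simp only [proj3_add, uu_def, vv_def, ww_eq, hP, qq]; push_cast; module)

lemma case10 (a : Fin 3 → ℤ) : flat3 a 1 0 = dnT (a 0 - a 2) (a 1 - a 2) := by
  rw [himg, dnT]; congr 1
  exact tri_id
    (by simp only [proj3_add, uu_def, vv_def, ww_eq, hP, qq]; push_cast; module)
    (by simp only [proj3_add, uu_def, vv_def, ww_eq, hP, qq]; push_cast; module)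
    (by simp only [proj3_add, uu_def, vv_def, ww_eq, hP, qq]; push_cast; module)

lemma case12 (a : Fin 3 → ℤ) : flat3 a 1 2 = upT (a 0 - a 2 - 1) (a 1 - a 2) := by
  rw [himg, upT]; congr 1
  exact tri_rot1
    (by simp only [proj3_add, uu_def, vv_def, ww_eq, hP, qq]; push_cast; module)
    (by simp only [proj3_add, uu_def, vv_def, ww_eq, hP, qq]; push_cast; module)
    (by simp only [proj3_add, uu_def, vv_def, ww_eq, hP, qq]; push_cast; module)

lemma case20 (a : Fin 3 → ℤ) : flat3 a 2 0 = upT (a 0 - a 2 - 1) (a 1 - a 2 - 1) := by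
  rw [himg, upT]; congr 1
  exact tri_rot2
    (by simp only [proj3_add, uu_def, vv_def, ww_eq, hP, qq]; push_cast; module)
    (by simp only [proj3_add, uu_def, vv_def, ww_eq, hP, qq]; push_cast; module)
    (by simp only [proj3_add, uu_def, vv_def, ww_eq, hP, qq]; push_cast; module)

lemma case21 (a : Fin 3 → ℤ) : flat3 a 2 1 = dnT (a 0 - a 2 - 1) (a 1 - a 2 - 1) := by
  rw [himg, dnT]; congr 1
  exact tri_rot2
    (by simp only [proj3_add, uu_def, vv_def, ww_eq, hP, qq]; push_cast; module)
    (by simp only [proj3_add, uu_def, vv_def, ww_eq, hP, qq]; push_cast; module)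
    (by simp only [proj3_add, uu_def, vv_def, ww_eq, hP, qq]; push_cast; module)

/-- Every flat triangle is an up or a down triangle of the lattice. -/
lemma norm3 (a : Fin 3 → ℤ) (i j : Fin 3) (hij : i ≠ j) :
    ∃ m n : ℤ, flat3 a i j = upT m n ∨ flat3 a i j = dnT m n := by
  fin_cases i <;> fin_cases j
  · exact absurd rfl hij
  · exact ⟨_, _, Or.inl (case01 a)⟩
  · exact ⟨_, _, Or.inr (case02 a)⟩
  · exact ⟨_, _, Or.inr (case10 a)⟩
  · exact absurd rfl hij
  · exact ⟨_, _, Or.inl (case12 a)⟩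
  · exact ⟨_, _, Or.inl (case20 a)⟩
  · exact ⟨_, _, Or.inr (case21 a)⟩
  · exact absurd rfl hij

/-- From a point of the intrinsic interior one can move a bit in any direction of
the affine span and stay in the set. -/
lemma push {S : Set E3} {x d : E3} (hx : x ∈ intrinsicInterior ℝ S)
    (hd : d ∈ (affineSpan ℝ S).direction) : ∃ ε : ℝ, 0 < ε ∧ x + ε • d ∈ S := by
  obtain ⟨y, hy, rfl⟩ := hx
  have hmem : ∀ t : ℝ, (y : E3) + t • d ∈ affineSpan ℝ S := by
    intro t
    have := AffineSubspace.vadd_mem_of_mem_direction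
      (Submodule.smul_mem _ t hd) y.2
    simpa [vadd_eq_add, add_comm] using this
  let c : ℝ → affineSpan ℝ S := fun t => ⟨(y : E3) + t • d, hmem t⟩
  have hc : Continuous c := by
    refine Continuous.subtype_mk ?_ _
    exact continuous_const.add (continuous_id.smul continuous_const)
  have hc0 : c 0 = y := Subtype.ext (by simp [c])
  have hnhds : c ⁻¹' interior (((↑) : affineSpan ℝ S → E3) ⁻¹' S) ∈ nhds (0 : ℝ) :=
    hc.continuousAt.preimage_mem_nhds (isOpen_interior.mem_nhds (hc0 ▸ hy))
  obtain ⟨ε, hε, hball⟩ := Metric.mem_nhds_iff.mp hnhds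
  refine ⟨ε / 2, by positivity, ?_⟩
  have hmem2 : c (ε / 2) ∈ interior (((↑) : affineSpan ℝ S → E3) ⁻¹' S) := by
    apply hball
    simp only [Metric.mem_ball, Real.dist_eq, sub_zero]
    rw [abs_of_pos (by positivity)]
    linarith
  have h3 : c (ε / 2) ∈ (Subtype.val ⁻¹' S : Set (affineSpan ℝ S)) := interior_subset hmem2
  exact h3

lemma mem_dir_of {s : Set E3} {p q : E3} (hp : p ∈ s) (hq : q ∈ s) :
    p - q ∈ (affineSpan ℝ (convexHull ℝ s)).direction := by
  rw [affineSpan_convexHull, direction_affineSpan]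
  simpa [vsub_eq_sub] using vsub_mem_vectorSpan ℝ hp hq

/-- Strict inequality on the intrinsic interior of a triangle. -/
lemma strict {p0 p1 p2 x d : E3} {φ : E3 →ₗ[ℝ] ℝ} {c : ℝ}
    (h0 : c ≤ φ p0) (h1 : c ≤ φ p1) (h2 : c ≤ φ p2)
    (hd : d ∈ (affineSpan ℝ (convexHull ℝ ({p0, p1, p2} : Set E3))).direction)
    (hφd : φ d < 0)
    (hx : x ∈ intrinsicInterior ℝ (convexHull ℝ ({p0, p1, p2} : Set E3))) : c < φ x := by
  have hsub : convexHull ℝ ({p0, p1, p2} : Set E3) ⊆ {y | c ≤ φ y} := by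
    apply convexHull_min ?_ (convex_halfSpace_ge φ.isLinear c)
    intro y hy
    simp only [Set.mem_insert_iff, Set.mem_singleton_iff] at hy
    rcases hy with rfl | rfl | rfl <;> assumption
  obtain ⟨ε, hε, hmem⟩ := push hx hd
  have hle := hsub hmem
  simp only [Set.mem_setOf_eq, map_add, map_smul, smul_eq_mul] at hle
  nlinarith

lemma mem0 (p0 p1 p2 : E3) : p0 ∈ ({p0, p1, p2} : Set E3) := Set.mem_insert _ _
lemma mem1 (p0 p1 p2 : E3) : p1 ∈ ({p0, p1, p2} : Set E3) :=
  Set.mem_insert_iff.mpr (Or.inr (Set.mem_insert _ _))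
lemma mem2 (p0 p1 p2 : E3) : p2 ∈ ({p0, p1, p2} : Set E3) :=
  Set.mem_insert_iff.mpr (Or.inr (Set.mem_insert_iff.mpr (Or.inr rfl)))

lemma riUp {m n : ℤ} {x : E3} (hx : x ∈ intrinsicInterior ℝ (upT m n)) :
    (n : ℝ) < gL x ∧ (m : ℝ) - n < fL x - gL x ∧ fL x < m + 1 := by
  set q := qq m n with hq
  have hfq : fL q = m := by simp [hq, qq, map_add, map_smul, f_uu, f_vv]
  have hgq : gL q = n := by simp [hq, qq, map_add, map_smul, g_uu, g_vv]
  have huu : uu ∈ (affineSpan ℝ (upT m n)).direction := by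
    have := mem_dir_of (mem1 q (q + uu) (q + uu + vv)) (mem0 q (q + uu) (q + uu + vv))
    have h : q + uu - q = uu := by module
    rw [h] at this
    exact this
  have hvv : vv ∈ (affineSpan ℝ (upT m n)).direction := by
    have := mem_dir_of (mem2 q (q + uu) (q + uu + vv)) (mem1 q (q + uu) (q + uu + vv))
    have h : q + uu + vv - (q + uu) = vv := by module
    rw [h] at this
    exact this
  rw [upT] at hx
  rw [← hq] at hx
  rw [upT, ← hq] at huu hvv
  clear_value q
  refine ⟨?_, ?_, ?_⟩
  · exact strict (φ := gL) (le_of_eq hgq.symm) (by simp [map_add, hgq, g_uu])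
      (by simp [map_add, hgq, g_uu, g_vv])
      (Submodule.neg_mem _ hvv)
      (by simp [g_vv]) hx
  · have := strict (φ := fL - gL) (c := (m : ℝ) - n)
      (by simp [LinearMap.sub_apply, hfq, hgq])
      (by simp [LinearMap.sub_apply, map_add, hfq, hgq, f_uu, g_uu])
      (by simp [LinearMap.sub_apply, map_add, hfq, hgq, f_uu, g_uu, f_vv, g_vv])
      (Submodule.sub_mem _ hvv huu)
      (by simp [LinearMap.sub_apply, f_vv, g_vv, f_uu, g_uu]) hx
    simpa [LinearMap.sub_apply] using this
  · have := strict (φ := -fL) (c := -((m : ℝ) + 1))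
      (by simp [LinearMap.neg_apply, hfq])
      (by simp [LinearMap.neg_apply, map_add, hfq, f_uu])
      (by simp [LinearMap.neg_apply, map_add, hfq, f_uu, f_vv])
      huu
      (by simp [LinearMap.neg_apply, f_uu]) hx
    simp only [LinearMap.neg_apply] at this
    linarith

lemma riDn {m n : ℤ} {x : E3} (hx : x ∈ intrinsicInterior ℝ (dnT m n)) :
    (m : ℝ) < fL x ∧ (n : ℝ) - m < gL x - fL x ∧ gL x < n + 1 := by
  set q := qq m n with hq
  have hfq : fL q = m := by simp [hq, qq, map_add, map_smul, f_uu, f_vv]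
  have hgq : gL q = n := by simp [hq, qq, map_add, map_smul, g_uu, g_vv]
  have huu : uu ∈ (affineSpan ℝ (dnT m n)).direction := by
    have := mem_dir_of (mem2 q (q + vv) (q + uu + vv)) (mem1 q (q + vv) (q + uu + vv))
    have h : q + uu + vv - (q + vv) = uu := by module
    rw [h] at this
    exact this
  have hvv : vv ∈ (affineSpan ℝ (dnT m n)).direction := by
    have := mem_dir_of (mem1 q (q + vv) (q + uu + vv)) (mem0 q (q + vv) (q + uu + vv))
    have h : q + vv - q = vv := by module
    rw [h] at this
    exact this
  rw [dnT] at hx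
  rw [← hq] at hx
  rw [dnT, ← hq] at huu hvv
  clear_value q
  refine ⟨?_, ?_, ?_⟩
  · exact strict (φ := fL) (le_of_eq hfq.symm) (by simp [map_add, hfq, f_vv])
      (by simp [map_add, hfq, f_uu, f_vv])
      (Submodule.neg_mem _ huu)
      (by simp [f_uu]) hx
  · have := strict (φ := gL - fL) (c := (n : ℝ) - m)
      (by simp [LinearMap.sub_apply, hfq, hgq])
      (by simp [LinearMap.sub_apply, map_add, hfq, hgq, f_vv, g_vv])
      (by simp [LinearMap.sub_apply, map_add, hfq, hgq, f_uu, g_uu, f_vv, g_vv])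
      (Submodule.sub_mem _ huu hvv)
      (by simp [LinearMap.sub_apply, f_vv, g_vv, f_uu, g_uu]) hx
    simpa [LinearMap.sub_apply] using this
  · have := strict (φ := -gL) (c := -((n : ℝ) + 1))
      (by simp [LinearMap.neg_apply, hgq])
      (by simp [LinearMap.neg_apply, map_add, hgq, g_vv])
      (by simp [LinearMap.neg_apply, map_add, hgq, g_uu, g_vv])
      hvv
      (by simp [LinearMap.neg_apply, g_vv]) hx
    simp only [LinearMap.neg_apply] at this
    linarith

lemma int_pin {m m' : ℤ} {s : ℝ} (h1 : (m : ℝ) < s) (h2 : s < m + 1)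
    (h1' : (m' : ℝ) < s) (h2' : s < m' + 1) : m = m' := by
  have ha : (-1 : ℝ) < ((m - m' : ℤ) : ℝ) := by push_cast; linarith
  have hb : ((m - m' : ℤ) : ℝ) < 1 := by push_cast; linarith
  have ha' : (-1 : ℤ) < m - m' := by exact_mod_cast ha
  have hb' : m - m' < 1 := by exact_mod_cast hb
  omega

end Stmt4Aux

open Stmt4Aux in
/-- distinct flat triangles have disjoint relative interiors
(interiors within the 2-dimensional hyperplane H). -/
theorem stmt4 (a b : Fin 3 → ℤ) (i j k l : Fin 3)
    (hij : i ≠ j) (hkl : k ≠ l)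
    (hne : flat3 a i j ≠ flat3 b k l) :
    Disjoint (intrinsicInterior ℝ (flat3 a i j)) (intrinsicInterior ℝ (flat3 b k l)) := by
  rw [Set.disjoint_left]
  intro x hx1 hx2
  obtain ⟨m, n, h1⟩ := norm3 a i j hij
  obtain ⟨m', n', h2⟩ := norm3 b k l hkl
  rcases h1 with h1 | h1 <;> rcases h2 with h2 | h2 <;>
    rw [h1] at hx1 <;> rw [h2] at hx2
  · obtain ⟨u1, u2, u3⟩ := riUp hx1
    obtain ⟨w1, w2, w3⟩ := riUp hx2
    have hm : m = m' := int_pin (by linarith) u3 (by linarith) w3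
    have hn : n = n' := int_pin u1 (by linarith) w1 (by linarith)
    exact hne (by rw [h1, h2, hm, hn])
  · obtain ⟨u1, u2, u3⟩ := riUp hx1
    obtain ⟨w1, w2, w3⟩ := riDn hx2
    have hm : m = m' := int_pin (by linarith) u3 w1 (by linarith)
    have hn : n = n' := int_pin u1 (by linarith) (by linarith) w3
    rw [hm, hn] at u2
    linarith
  · obtain ⟨u1, u2, u3⟩ := riDn hx1
    obtain ⟨w1, w2, w3⟩ := riUp hx2
    have hm : m = m' := int_pin u1 (by linarith) (by linarith) w3
    have hn : n = n' := int_pin (by linarith) u3 w1 (by linarith)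
    rw [hm, hn] at u2
    linarith
  · obtain ⟨u1, u2, u3⟩ := riDn hx1
    obtain ⟨w1, w2, w3⟩ := riDn hx2
    have hm : m = m' := int_pin u1 (by linarith) w1 (by linarith)
    have hn : n = n' := int_pin (by linarith) u3 (by linarith) w3
    exact hne (by rw [h1, h2, hm, hn])
end
end

section
/- Consecutive flat triangles of a local trajectory share an edge (downward step): for every a ∈ ℤ³ and distinct i,j ∈ {1,2,3}, the intersection π(T(a;i,j)) ∩ π(T(a+eᵢ;j,i)) equals the projected segment π([a+eᵢ, a+eᵢ+eⱼ]), i.e. the image under π of the convex hull of {a+eᵢ, a+eᵢ+eⱼ}. -/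
noncomputable section

lemma ee3_apply (i n : Fin 3) : ee3 i n = if n = i then 1 else 0 := by
  simp [ee3, EuclideanSpace.single_apply]

/-- f(proj3 v) = f(v) for f(w) = wᵢ - w_k. -/
lemma fproj (i k : Fin 3) (v : E3) : proj3 v i - proj3 v k = v i - v k := by
  simp only [proj3, PiLp.sub_apply, PiLp.smul_apply, smul_eq_mul, ones3_apply]
  ring

set_option maxHeartbeats 1000000

/-- π(T(a;i,j)) ∩ π(T(a+eᵢ;j,i)) equals the projected segment
π([a+eᵢ, a+eᵢ+eⱼ]). -/
theorem stmt5 (a : Fin 3 → ℤ) (i j : Fin 3) (hij : i ≠ j) :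
    flat3 a i j ∩ flat3 (a + Pi.single i 1) j i =
      proj3 '' convexHull ℝ {toE3 a + ee3 i, toE3 a + ee3 i + ee3 j} := by
  obtain ⟨k, hki, hkj⟩ : ∃ k : Fin 3, k ≠ i ∧ k ≠ j := by
    revert hij; revert i j; decide
  set p0 : E3 := toE3 a with hp0
  set p1 : E3 := toE3 a + ee3 i with hp1
  set p2 : E3 := toE3 a + ee3 i + ee3 j with hp2
  set p3 : E3 := toE3 a + ee3 i + ee3 j + ee3 i with hp3
  have hT2 : slant3 (a + Pi.single i 1) j i = convexHull ℝ {p1, p2, p3} := by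
    rw [slant3, toE3_add_single]
  -- coordinate values of the functional f(w) = w i - w k
  have hfp0 : p0 i - p0 k = (a i : ℝ) - a k := by simp [hp0, toE3]
  have hfp1 : p1 i - p1 k = (a i : ℝ) - a k + 1 := by
    simp [hp1, toE3, PiLp.add_apply, ee3_apply, hki, hkj, hij]; ring
  have hfp2 : p2 i - p2 k = (a i : ℝ) - a k + 1 := by
    simp [hp2, toE3, PiLp.add_apply, ee3_apply, hki, hkj, hij]; ring
  have hfp3 : p3 i - p3 k = (a i : ℝ) - a k + 2 := by
    simp [hp3, toE3, PiLp.add_apply, ee3_apply, hki, hkj, hij]; ring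
  apply Set.Subset.antisymm
  · rintro y ⟨⟨x₁, hx₁, rfl⟩, x₂, hx₂, hx₂y⟩
    -- decompose x₁ ∈ conv {p0, p1, p2}
    rw [slant3, convexHull_insert (by simp), mem_convexJoin] at hx₁
    obtain ⟨q, hq, z, hz, hx₁⟩ := hx₁
    rw [Set.mem_singleton_iff] at hq; subst hq
    rw [convexHull_pair] at hz
    obtain ⟨sa, sb, hsa, hsb, hsab, rfl⟩ := hz
    obtain ⟨ta, tb, hta, htb, htab, rfl⟩ := hx₁
    -- decompose x₂ ∈ conv {p1, p2, p3}
    rw [hT2, convexHull_insert (by simp), mem_convexJoin] at hx₂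
    obtain ⟨q, hq, z', hz', hx₂⟩ := hx₂
    rw [Set.mem_singleton_iff] at hq; subst hq
    rw [convexHull_pair] at hz'
    obtain ⟨sa', sb', hsa', hsb', hsab', rfl⟩ := hz'
    obtain ⟨ta', tb', hta', htb', htab', rfl⟩ := hx₂
    -- compare functional values through the projection
    have key : proj3 (ta • p0 + tb • (sa • p1 + sb • p2)) i
        - proj3 (ta • p0 + tb • (sa • p1 + sb • p2)) k
        = proj3 (ta' • p1 + tb' • (sa' • p2 + sb' • p3)) i
        - proj3 (ta' • p1 + tb' • (sa' • p2 + sb' • p3)) k := by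
      rw [hx₂y]
    rw [fproj, fproj] at key
    simp only [PiLp.add_apply, PiLp.smul_apply, smul_eq_mul] at key
    have hc : ta = 0 := by
      have e1 : ta * p0 i + tb * (sa * p1 i + sb * p2 i)
          - (ta * p0 k + tb * (sa * p1 k + sb * p2 k))
          = ((a i : ℝ) - a k) + tb := by
        linear_combination ta * hfp0 + tb * sa * hfp1 + tb * sb * hfp2
          + tb * ((a i : ℝ) - a k + 1) * hsab + ((a i : ℝ) - a k) * htab
      have e2 : ta' * p1 i + tb' * (sa' * p2 i + sb' * p3 i)
          - (ta' * p1 k + tb' * (sa' * p2 k + sb' * p3 k))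
          = ((a i : ℝ) - a k) + 1 + tb' * sb' := by
        linear_combination ta' * hfp1 + tb' * sa' * hfp2 + tb' * sb' * hfp3
          + tb' * ((a i : ℝ) - a k + 1) * hsab' + ((a i : ℝ) - a k + 1) * htab'
      rw [e1, e2] at key
      have := mul_nonneg htb' hsb'
      linarith
    have hx1 : ta • p0 + tb • (sa • p1 + sb • p2) = sa • p1 + sb • p2 := by
      have htb1 : tb = 1 := by linarith
      rw [hc, htb1, zero_smul, one_smul, zero_add]
    rw [hx1]
    exact ⟨sa • p1 + sb • p2, by rw [convexHull_pair]; exact ⟨sa, sb, hsa, hsb, hsab, rfl⟩, rfl⟩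
  · intro y hy
    obtain ⟨x, hx, rfl⟩ := hy
    have h1 : x ∈ slant3 a i j := by
      refine convexHull_mono ?_ hx
      intro z hz
      simp only [Set.mem_insert_iff, Set.mem_singleton_iff] at hz
      rcases hz with rfl | rfl <;> simp [slant3, hp1, hp2]
    have h2 : x ∈ slant3 (a + Pi.single i 1) j i := by
      rw [hT2]
      refine convexHull_mono ?_ hx
      intro z hz
      simp only [Set.mem_insert_iff, Set.mem_singleton_iff] at hz
      rcases hz with rfl | rfl <;> simp
    exact ⟨⟨x, h1, rfl⟩, x, h2, rfl⟩
end
end
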